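/- Every n-vertex simple graph with at least ⌊n²/4⌋ + 1 edges contains at least ⌊n/4⌋ triangles. -/

import Mathlib

open Finset

private lemma rademacher_fiber_card {n : ℕ} (G : SimpleGraph (Fin n)) [DecidableRel G.Adj]
    (t : Finset (Fin n)) (ht : t ∈ G.cliqueFinset 3) :
    ((univ : Finset (Fin n × Fin n × Fin n)).filter
      (fun p => (G.Adj p.1 p.2.1 ∧ G.Adj p.1 p.2.2 ∧ G.Adj p.2.1 p.2.2) ∧
        ({p.1, p.2.1, p.2.2} : Finset (Fin n)) = t)).card = 6 := by
  rw [SimpleGraph.mem_cliqueFinset_iff, SimpleGraph.is3Clique_iff] at ht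
  obtain ⟨a, b, c, hab, hac, hbc, rfl⟩ := ht
  have hab' : a ≠ b := hab.ne
  have hac' : a ≠ c := hac.ne
  have hbc' : b ≠ c := hbc.ne
  have : ((univ : Finset (Fin n × Fin n × Fin n)).filter
      (fun p => (G.Adj p.1 p.2.1 ∧ G.Adj p.1 p.2.2 ∧ G.Adj p.2.1 p.2.2) ∧
        ({p.1, p.2.1, p.2.2} : Finset (Fin n)) = {a, b, c}))
      = {(a,b,c), (a,c,b), (b,a,c), (b,c,a), (c,a,b), (c,b,a)} := by
    ext ⟨u, v, w⟩
    simp only [mem_filter, mem_univ, true_and, mem_insert, mem_singleton, Prod.mk.injEq]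
    constructor
    · rintro ⟨⟨huv, huw, hvw⟩, heq⟩
      have hu : u = a ∨ u = b ∨ u = c := by
        have := heq ▸ (mem_insert_self u {v, w}); simpa using this
      have hv : v = a ∨ v = b ∨ v = c := by
        have : v ∈ ({u, v, w} : Finset (Fin n)) := by simp
        rw [heq] at this; simpa using this
      have hw : w = a ∨ w = b ∨ w = c := by
        have : w ∈ ({u, v, w} : Finset (Fin n)) := by simp
        rw [heq] at this; simpa using this
      have hA : a ∈ ({u, v, w} : Finset (Fin n)) := by rw [heq]; simp
      have hB : b ∈ ({u, v, w} : Finset (Fin n)) := by rw [heq]; simp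
      have hC : c ∈ ({u, v, w} : Finset (Fin n)) := by rw [heq]; simp
      simp only [mem_insert, mem_singleton] at hA hB hC
      have huv' := huv.ne
      have huw' := huw.ne
      have hvw' := hvw.ne
      rcases hu with rfl | rfl | rfl <;> rcases hv with rfl | rfl | rfl <;>
        rcases hw with rfl | rfl | rfl <;> simp_all
    · rintro (⟨rfl, rfl, rfl⟩ | ⟨rfl, rfl, rfl⟩ | ⟨rfl, rfl, rfl⟩ | ⟨rfl, rfl, rfl⟩ |
        ⟨rfl, rfl, rfl⟩ | ⟨rfl, rfl, rfl⟩) <;>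
      refine ⟨⟨?_, ?_, ?_⟩, ?_⟩ <;>
      first
        | exact hab | exact hab.symm | exact hac | exact hac.symm
        | exact hbc | exact hbc.symm
        | (ext x; simp; try tauto)
  rw [this]
  rw [card_insert_of_notMem (by simp [Prod.ext_iff]; tauto),
      card_insert_of_notMem (by simp [Prod.ext_iff]; tauto),
      card_insert_of_notMem (by simp [Prod.ext_iff]; tauto),
      card_insert_of_notMem (by simp [Prod.ext_iff]; tauto),
      card_insert_of_notMem (by simp [Prod.ext_iff]; tauto),
      card_singleton]

private lemma rademacher_triple_count {n : ℕ} (G : SimpleGraph (Fin n)) [DecidableRel G.Adj] :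
    ((univ : Finset (Fin n × Fin n × Fin n)).filter
      (fun p => G.Adj p.1 p.2.1 ∧ G.Adj p.1 p.2.2 ∧ G.Adj p.2.1 p.2.2)).card
      = ∑ u, ∑ v ∈ G.neighborFinset u, (G.neighborFinset u ∩ G.neighborFinset v).card := by
  rw [card_filter, Fintype.sum_prod_type]
  congr 1; ext u
  rw [Fintype.sum_prod_type]
  rw [G.neighborFinset_eq_filter, sum_filter]
  congr 1; ext v
  by_cases h : G.Adj u v
  · simp only [h, true_and, if_true]
    rw [← card_filter]
    congr 1
    ext w
    simp [SimpleGraph.mem_neighborFinset]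
  · simp [h]

/-- Rademacher's theorem: every `n`-vertex graph with at least `⌊n²/4⌋ + 1` edges
contains at least `⌊n/4⌋` triangles (3-element pairwise adjacent vertex sets). -/
theorem rademacher (n : ℕ) (G : SimpleGraph (Fin n)) [DecidableRel G.Adj]
    (hE : n ^ 2 / 4 + 1 ≤ G.edgeFinset.card) :
    n / 4 ≤ (G.cliqueFinset 3).card := by
  rcases Nat.eq_zero_or_pos n with rfl | hn
  · simp
  set m := G.edgeFinset.card with hm
  set T := (G.cliqueFinset 3).card with hT
  -- 4m ≥ n² + 3
  have hsq : n ^ 2 % 4 ≤ 1 := by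
    rcases Nat.even_or_odd n with ⟨k, rfl⟩ | ⟨k, rfl⟩
    · have : (k + k) ^ 2 = 4 * k ^ 2 := by ring
      omega
    · have : (2 * k + 1) ^ 2 = 4 * (k ^ 2 + k) + 1 := by ring
      omega
  have h4m : n ^ 2 + 3 ≤ 4 * m := by
    have := Nat.div_add_mod (n ^ 2) 4
    omega
  -- the triple count equals 6T
  have h6T : ((univ : Finset (Fin n × Fin n × Fin n)).filter
      (fun p => G.Adj p.1 p.2.1 ∧ G.Adj p.1 p.2.2 ∧ G.Adj p.2.1 p.2.2)).card = 6 * T := by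
    rw [card_eq_sum_card_fiberwise
      (f := fun p : Fin n × Fin n × Fin n => ({p.1, p.2.1, p.2.2} : Finset (Fin n)))
      (t := G.cliqueFinset 3) (by
        rintro ⟨u, v, w⟩ hp
        simp only [mem_coe, mem_filter] at hp
        rw [mem_coe, SimpleGraph.mem_cliqueFinset_iff]
        exact SimpleGraph.is3Clique_triple_iff.2 ⟨hp.2.1, hp.2.2.1, hp.2.2.2⟩)]
    have hfib : ∀ t ∈ G.cliqueFinset 3,
        (((univ : Finset (Fin n × Fin n × Fin n)).filter
          (fun p => G.Adj p.1 p.2.1 ∧ G.Adj p.1 p.2.2 ∧ G.Adj p.2.1 p.2.2)).filter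
          (fun p => ({p.1, p.2.1, p.2.2} : Finset (Fin n)) = t)).card = 6 := by
      intro t ht
      rw [filter_filter]
      exact rademacher_fiber_card G t ht
    rw [Finset.sum_congr rfl hfib, Finset.sum_const, smul_eq_mul, mul_comm]
  have hA : 6 * T = ∑ u, ∑ v ∈ G.neighborFinset u,
      (G.neighborFinset u ∩ G.neighborFinset v).card := by
    rw [← h6T, rademacher_triple_count]
  -- degree sums
  have hdeg : ∑ v, G.degree v = 2 * m := G.sum_degrees_eq_twice_card_edges
  set D := ∑ v, G.degree v ^ 2 with hD
  have hswap : ∑ u, ∑ v ∈ G.neighborFinset u, G.degree v = D := by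
    have h1 : ∀ u : Fin n, ∑ v ∈ G.neighborFinset u, G.degree v
        = ∑ v, if G.Adj u v then G.degree v else 0 := fun u => by
      rw [G.neighborFinset_eq_filter, sum_filter]
    rw [Finset.sum_congr rfl fun u _ => h1 u, Finset.sum_comm]
    refine Finset.sum_congr rfl fun v _ => ?_
    have h2 : (∑ u, if G.Adj v u then G.degree v else 0) = G.degree v ^ 2 := by
      rw [← sum_filter, ← G.neighborFinset_eq_filter, sum_const, smul_eq_mul,
        G.card_neighborFinset_eq_degree, sq]
    rw [← h2]
    exact Finset.sum_congr rfl fun u _ => if_congr (G.adj_comm u v) rfl rfl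
  -- 2D ≤ 6T + 2mn
  have key1 : 2 * D ≤ 6 * T + 2 * m * n := by
    have hle : ∑ u, ∑ v ∈ G.neighborFinset u, (G.degree u + G.degree v)
        ≤ ∑ u, ∑ v ∈ G.neighborFinset u,
          ((G.neighborFinset u ∩ G.neighborFinset v).card + n) := by
      refine Finset.sum_le_sum fun u _ => Finset.sum_le_sum fun v hv => ?_
      have h1 := Finset.card_inter_add_card_union (G.neighborFinset u) (G.neighborFinset v)
      have h2 : (G.neighborFinset u ∪ G.neighborFinset v).card ≤ n := by
        have := Finset.card_le_univ (G.neighborFinset u ∪ G.neighborFinset v)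
        simpa using this
      have h3 : (G.neighborFinset u).card = G.degree u := rfl
      have h4 : (G.neighborFinset v).card = G.degree v := rfl
      omega
    have hLHS : ∑ u, ∑ v ∈ G.neighborFinset u, (G.degree u + G.degree v) = 2 * D := by
      have : ∀ u : Fin n, ∑ v ∈ G.neighborFinset u, (G.degree u + G.degree v)
          = G.degree u ^ 2 + ∑ v ∈ G.neighborFinset u, G.degree v := fun u => by
        rw [Finset.sum_add_distrib, sum_const, smul_eq_mul,
          G.card_neighborFinset_eq_degree, sq]
      rw [Finset.sum_congr rfl fun u _ => this u, Finset.sum_add_distrib, hswap, ← hD, two_mul]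
    have hRHS : ∑ u, ∑ v ∈ G.neighborFinset u,
        ((G.neighborFinset u ∩ G.neighborFinset v).card + n) = 6 * T + 2 * m * n := by
      have : ∀ u : Fin n, ∑ v ∈ G.neighborFinset u,
          ((G.neighborFinset u ∩ G.neighborFinset v).card + n)
          = (∑ v ∈ G.neighborFinset u, (G.neighborFinset u ∩ G.neighborFinset v).card)
            + G.degree u * n := fun u => by
        rw [Finset.sum_add_distrib, sum_const, smul_eq_mul, G.card_neighborFinset_eq_degree]
      rw [Finset.sum_congr rfl fun u _ => this u, Finset.sum_add_distrib, ← hA,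
        ← Finset.sum_mul, hdeg]
    rw [← hLHS, ← hRHS]
    exact hle
  -- Cauchy-Schwarz: 4m² ≤ nD
  have key2 : 4 * m ^ 2 ≤ n * D := by
    have hZ : ((∑ v, G.degree v : ℕ) : ℤ) ^ 2
        ≤ ((Finset.univ : Finset (Fin n)).card : ℤ) * ∑ v, (G.degree v : ℤ) ^ 2 := by
      have := sq_sum_le_card_mul_sum_sq (s := (Finset.univ : Finset (Fin n)))
        (f := fun v => (G.degree v : ℤ))
      push_cast
      push_cast at this
      exact this
    rw [hdeg] at hZ
    have hcard : ((Finset.univ : Finset (Fin n)).card : ℤ) = (n : ℤ) := by simp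
    rw [hcard] at hZ
    have : ((2 * m : ℕ) : ℤ) ^ 2 = ((4 * m ^ 2 : ℕ) : ℤ) := by push_cast; ring
    rw [this] at hZ
    have : ((n : ℤ) * ∑ v, (G.degree v : ℤ) ^ 2) = ((n * D : ℕ) : ℤ) := by
      rw [hD]; push_cast; ring
    rw [this] at hZ
    exact_mod_cast hZ
  -- combine
  have hnT : m ≤ n * T := by nlinarith [key1, key2, h4m]
  have hfloor : n / 4 * 4 ≤ n := Nat.div_mul_le_self n 4
  have hmul : n * (n / 4 * 4) ≤ n * n := Nat.mul_le_mul_left n hfloor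
  have hlt : n * (n / 4) < n * T := by nlinarith [hnT, h4m, hmul]
  exact le_of_lt (Nat.lt_of_mul_lt_mul_left hlt)
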